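/- Let q = p^e be a prime power with e even, and let A ⊆ F_q^2 with 1 < |A| ≤ q. Then either A is contained in a line, or A spans strictly more than |A|/√q directions. -/

import Mathlib

/-- The set of directions determined by a set `A ⊆ F²`, as a subset of `F ∪ {∞}`
(modelled as `Option F`, with `none` playing the role of `∞`). -/
def directions {F : Type*} [Field F] (A : Set (F × F)) : Set (Option F) :=
  {d | ∃ P ∈ A, ∃ Q ∈ A, P ≠ Q ∧
    ((Q.1 = P.1 ∧ d = none) ∨ (Q.1 ≠ P.1 ∧ d = some ((Q.2 - P.2) / (Q.1 - P.1))))}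

open scoped Classical in
/-- The direction of the segment from `P` to `Q`. -/
noncomputable def pdir {F : Type*} [Field F] (P Q : F × F) : Option F :=
  if Q.1 = P.1 then none else some ((Q.2 - P.2) / (Q.1 - P.1))

/-- Collinearity of the triple `(P, Q, R)` via the determinant. -/
def colr {F : Type*} [Field F] (P Q R : F × F) : Prop :=
  (Q.1 - P.1) * (R.2 - P.2) = (Q.2 - P.2) * (R.1 - P.1)

section Helpers

variable {F : Type*} [Field F]

lemma mem_directions {A : Set (F × F)} {P Q : F × F} (hP : P ∈ A) (hQ : Q ∈ A)
    (hne : P ≠ Q) : pdir P Q ∈ directions A := by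
  refine ⟨P, hP, Q, hQ, hne, ?_⟩
  by_cases h : Q.1 = P.1 <;> simp [pdir, h]

lemma colr_self_left (P R : F × F) : colr P P R := by simp [colr]

lemma colr_self_right (P Q : F × F) : colr P Q P := by simp [colr]

lemma colr_perm1 {P Q R : F × F} (h : colr P Q R) : colr R Q P := by
  unfold colr at *; linear_combination -h

lemma pdir_eq_iff {P Q R : F × F} (hQ : Q ≠ P) (hR : R ≠ P) :
    pdir P Q = pdir P R ↔ colr P Q R := by
  unfold pdir colr
  by_cases h1 : Q.1 = P.1 <;> by_cases h2 : R.1 = P.1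
  · rw [if_pos h1, if_pos h2, h1, h2]
    simp
  · have hq2 : Q.2 - P.2 ≠ 0 := sub_ne_zero.mpr fun h => hQ (Prod.ext h1 h)
    have hr1 : R.1 - P.1 ≠ 0 := sub_ne_zero.mpr h2
    rw [if_pos h1, if_neg h2]
    constructor
    · exact fun h => absurd h.symm (Option.some_ne_none _)
    · intro h
      rw [h1, sub_self, zero_mul] at h
      exact absurd h.symm (mul_ne_zero hq2 hr1)
  · have hr2 : R.2 - P.2 ≠ 0 := sub_ne_zero.mpr fun h => hR (Prod.ext h2 h)
    have hq1 : Q.1 - P.1 ≠ 0 := sub_ne_zero.mpr h1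
    rw [if_neg h1, if_pos h2]
    constructor
    · exact fun h => absurd h (Option.some_ne_none _)
    · intro h
      rw [h2, sub_self, mul_zero] at h
      exact absurd h (mul_ne_zero hq1 hr2)
  · rw [if_neg h1, if_neg h2, Option.some_inj,
      div_eq_div_iff (sub_ne_zero.mpr h1) (sub_ne_zero.mpr h2)]
    constructor <;> intro h <;> linear_combination -h

lemma pdir_comm {P Q : F × F} : pdir P Q = pdir Q P := by
  unfold pdir
  by_cases h : Q.1 = P.1
  · rw [if_pos h, if_pos h.symm]
  · rw [if_neg h, if_neg (Ne.symm h)]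
    congr 1
    rw [div_eq_div_iff (sub_ne_zero.mpr h) (sub_ne_zero.mpr (Ne.symm h))]
    ring

lemma colr_trans {P Q X Y : F × F} (hXY : X ≠ Y) (h1 : colr Q X Y) (h2 : colr P X Y) :
    colr X P Q := by
  unfold colr at *
  by_cases hv : X.1 = Y.1
  · have hv2 : Y.2 - X.2 ≠ 0 := sub_ne_zero.mpr fun h => hXY (Prod.ext hv h.symm)
    apply mul_left_cancel₀ hv2
    linear_combination (P.2 - X.2) * h1 - (Q.2 - X.2) * h2
  · have hv1 : Y.1 - X.1 ≠ 0 := sub_ne_zero.mpr (Ne.symm hv)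
    apply mul_left_cancel₀ hv1
    linear_combination (P.1 - X.1) * h1 - (Q.1 - X.1) * h2

lemma collinear_of_colr {A : Set (F × F)} {P Q : F × F} (hPQ : Q ≠ P)
    (h : ∀ X ∈ A, colr P Q X) : Collinear F A := by
  rw [collinear_iff_exists_forall_eq_smul_vadd]
  refine ⟨P, Q - P, fun X hX => ?_⟩
  have hc := h X hX
  unfold colr at hc
  by_cases h1 : Q.1 = P.1
  · have h2 : Q.2 - P.2 ≠ 0 := sub_ne_zero.mpr fun h' => hPQ (Prod.ext h1 h')
    refine ⟨(X.2 - P.2) / (Q.2 - P.2), ?_⟩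
    rw [h1, sub_self, zero_mul] at hc
    have hx1 : X.1 - P.1 = 0 := by
      rcases mul_eq_zero.mp hc.symm with h' | h'
      · exact absurd h' h2
      · exact h'
    have hx : X.1 = P.1 := sub_eq_zero.mp hx1
    ext
    · simp [hx, h1]
    · simp only [Prod.smul_snd, Prod.snd_sub, vadd_eq_add, Prod.snd_add, smul_eq_mul]
      field_simp
      ring
  · have h2 : Q.1 - P.1 ≠ 0 := sub_ne_zero.mpr h1
    refine ⟨(X.1 - P.1) / (Q.1 - P.1), ?_⟩
    ext
    · simp only [Prod.smul_fst, Prod.fst_sub, vadd_eq_add, Prod.fst_add, smul_eq_mul]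
      field_simp
      ring
    · simp only [Prod.smul_snd, Prod.snd_sub, vadd_eq_add, Prod.snd_add, smul_eq_mul]
      field_simp
      linear_combination hc

end Helpers

/-- For `q = p^e` with `e` even, a set `A ⊆ 𝔽_q²` with `1 < |A| ≤ q` is either
contained in a line or spans more than `|A|/√q` directions. -/
theorem directions_even (p e q : ℕ) (hp : p.Prime) (hepos : 0 < e) (he : Even e)
    (hq : q = p ^ e) {F : Type*} [Field F] [Fintype F] (hF : Fintype.card F = q)
    (A : Set (F × F)) (h1 : 1 < A.ncard) (h2 : A.ncard ≤ q) :
    Collinear F A ∨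
      ((directions A).ncard : ℝ) > (A.ncard : ℝ) / Real.sqrt q := by
  classical
  by_cases hcol : Collinear F A
  · exact Or.inl hcol
  right
  have hq0 : 0 < q := hq ▸ pow_pos hp.pos e
  have hAfin : A.Finite := Set.toFinite A
  have hDfin : (directions A).Finite := Set.toFinite _
  set n := A.ncard with hn
  set N := (directions A).ncard with hN
  -- a non-collinear triple exists
  obtain ⟨P, hP, Q0, hQ0, R0, hR0, hncol⟩ :
      ∃ P ∈ A, ∃ Q ∈ A, ∃ R ∈ A, ¬ colr P Q R := by
    by_contra hcon
    push_neg at hcon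
    obtain ⟨P, hPA, Q, hQA, hPQ⟩ := (Set.one_lt_ncard hAfin).mp h1
    exact hcol (collinear_of_colr (Ne.symm hPQ) fun X hX => hcon P hPA Q hQA X hX)
  have hQ0P : Q0 ≠ P := fun h => hncol (by rw [h]; exact colr_self_left _ _)
  have hR0P : R0 ≠ P := fun h => hncol (by rw [h]; exact colr_self_right _ _)
  have hN2 : 2 ≤ N := by
    have hd12 : pdir P Q0 ≠ pdir P R0 := fun h => hncol ((pdir_eq_iff hQ0P hR0P).mp h)
    exact (Set.one_lt_ncard hDfin).mpr
      ⟨_, mem_directions hP hQ0 (Ne.symm hQ0P), _, mem_directions hP hR0 (Ne.symm hR0P), hd12⟩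
  -- the fiber bound
  have fiber_bound : ∀ d : Option F, {X | X ∈ A ∧ X ≠ P ∧ pdir P X = d}.ncard ≤ N - 1 := by
    intro d
    by_cases hne : {X | X ∈ A ∧ X ≠ P ∧ pdir P X = d}.Nonempty
    · obtain ⟨X0, hX0A, hX0P, hX0d⟩ := hne
      have hdD : d ∈ directions A := hX0d ▸ mem_directions hP hX0A (Ne.symm hX0P)
      -- find a point off the line through P in direction d
      obtain ⟨Q, hQA, hQP, hQd⟩ : ∃ Q ∈ A, Q ≠ P ∧ pdir P Q ≠ d := by
        by_contra hcon
        push_neg at hcon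
        apply hcol
        apply collinear_of_colr hX0P
        intro X hX
        by_cases hXP : X = P
        · rw [hXP]; exact colr_self_right _ _
        · exact (pdir_eq_iff hX0P hXP).mp (hX0d.trans (hcon X hX hXP).symm)
      have hmap : ∀ X ∈ {X | X ∈ A ∧ X ≠ P ∧ pdir P X = d},
          pdir Q X ∈ directions A ∧ pdir Q X ≠ d := by
        rintro X ⟨hXA, hXP, hXd⟩
        have hXQ : X ≠ Q := fun h => hQd (h ▸ hXd)
        refine ⟨mem_directions hQA hXA (Ne.symm hXQ), ?_⟩
        intro hQXd
        have h1' : pdir X Q = pdir X P := by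
          calc pdir X Q = pdir Q X := pdir_comm
            _ = d := hQXd
            _ = pdir P X := hXd.symm
            _ = pdir X P := pdir_comm
        have h3 : colr P Q X := colr_perm1 ((pdir_eq_iff (Ne.symm hXQ) (Ne.symm hXP)).mp h1')
        exact hQd (((pdir_eq_iff hQP hXP).mpr h3).trans hXd)
      have hinj : Set.InjOn (pdir Q) {X | X ∈ A ∧ X ≠ P ∧ pdir P X = d} := by
        rintro X ⟨hXA, hXP, hXd⟩ Y ⟨hYA, hYP, hYd⟩ hXY
        by_contra hne'
        have hXQ : X ≠ Q := fun h => hQd (h ▸ hXd)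
        have hYQ : Y ≠ Q := fun h => hQd (h ▸ hYd)
        have c1 : colr Q X Y := (pdir_eq_iff hXQ hYQ).mp hXY
        have c2 : colr P X Y := (pdir_eq_iff hXP hYP).mp (hXd.trans hYd.symm)
        have c3 : colr X P Q := colr_trans hne' c1 c2
        have h4 : pdir X P = pdir X Q :=
          (pdir_eq_iff (Ne.symm hXP) (Ne.symm hXQ)).mpr c3
        have h5 : pdir Q X = d := by
          calc pdir Q X = pdir X Q := pdir_comm
            _ = pdir X P := h4.symm
            _ = pdir P X := pdir_comm
            _ = d := hXd
        exact (hmap X ⟨hXA, hXP, hXd⟩).2 h5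
      have hle := Set.ncard_le_ncard_of_injOn (pdir Q)
        (fun X hX => (Set.mem_diff _).mpr
          ⟨(hmap X hX).1, fun hmem => (hmap X hX).2 (Set.mem_singleton_iff.mp hmem)⟩)
        hinj hDfin.diff
      rwa [Set.ncard_diff_singleton_of_mem hdD] at hle
    · rw [Set.not_nonempty_iff_eq_empty.mp hne]
      simp
  -- counting
  have hcount : n - 1 ≤ (N - 1) * N := by
    have hPmem : P ∈ hAfin.toFinset := hAfin.mem_toFinset.mpr hP
    have hcard := Finset.card_le_mul_card_image_of_maps_to
      (f := pdir P) (s := hAfin.toFinset.erase P) (t := hDfin.toFinset)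
      (fun X hX => by
        rw [Finset.mem_erase] at hX
        exact hDfin.mem_toFinset.mpr
          (mem_directions hP (hAfin.mem_toFinset.mp hX.2) (Ne.symm hX.1)))
      (N - 1)
      (fun d _ => by
        have hset : (((hAfin.toFinset.erase P).filter (fun X => pdir P X = d)) : Set (F × F))
            = {X | X ∈ A ∧ X ≠ P ∧ pdir P X = d} := by
          ext X
          simp only [Finset.coe_filter, Finset.mem_erase, hAfin.mem_toFinset,
            Set.mem_setOf_eq]
          tauto
        calc ((hAfin.toFinset.erase P).filter (fun X => pdir P X = d)).card
            = (((hAfin.toFinset.erase P).filter (fun X => pdir P X = d)) : Set (F × F)).ncard :=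
              (Set.ncard_coe_finset _).symm
          _ = {X | X ∈ A ∧ X ≠ P ∧ pdir P X = d}.ncard := by rw [hset]
          _ ≤ N - 1 := fiber_bound d)
    rwa [Finset.card_erase_of_mem hPmem, ← Set.ncard_eq_toFinset_card _ hAfin,
      ← Set.ncard_eq_toFinset_card _ hDfin, ← hn, ← hN] at hcard
  -- arithmetic
  obtain ⟨K, hK⟩ : ∃ K, N = K + 1 := ⟨N - 1, by omega⟩
  have hK1 : 1 ≤ K := by omega
  rw [hK, Nat.add_sub_cancel, Nat.sub_le_iff_le_add] at hcount
  have hnN : n < N * N := by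
    rw [hK]; nlinarith [hcount, hK1]
  have hNpos : (0:ℝ) < (N:ℝ) := by exact_mod_cast Nat.lt_of_lt_of_le Nat.zero_lt_two hN2
  have hsq : (0:ℝ) < Real.sqrt q := Real.sqrt_pos.mpr (by exact_mod_cast hq0)
  rw [gt_iff_lt, div_lt_iff₀ hsq]
  have h5 : (n:ℝ) ≤ Real.sqrt n * Real.sqrt q := by
    rw [← Real.sqrt_mul (by positivity)]
    calc (n:ℝ) = Real.sqrt ((n:ℝ) ^ 2) := (Real.sqrt_sq (by positivity)).symm
      _ ≤ Real.sqrt ((n:ℝ) * q) := by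
          apply Real.sqrt_le_sqrt
          have hnq : (n:ℝ) ≤ q := by exact_mod_cast h2
          nlinarith
  have h6 : Real.sqrt n < N := by
    rw [Real.sqrt_lt' hNpos]
    have : (n:ℝ) < (N:ℝ) * N := by exact_mod_cast hnN
    nlinarith
  calc (n:ℝ) ≤ Real.sqrt n * Real.sqrt q := h5
    _ < N * Real.sqrt q := mul_lt_mul_of_pos_right h6 hsq
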